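/- Let A be a finite set of positive integers. If Γ_A does not have everywhere strong approximation, then there exist an integer k* ≥ 2 and a residue r such that every element of A is congruent to r modulo k*. -/

import Mathlib

/-- The generator matrix `[[0,1],[1,a]]`. -/
def cfGen (a : ℕ) : Matrix (Fin 2) (Fin 2) ℤ := !![0, 1; 1, (a : ℤ)]

/-- The determinant-one semigroup `Γ_A`: all nonempty finite products of the
generators `[[0,1],[1,a]]·[[0,1],[1,a']]` with `a, a' ∈ A`. -/
def GammaSemigroup (A : Set ℕ) : Set (Matrix (Fin 2) (Fin 2) ℤ) :=
  { M | ∃ l : List (ℕ × ℕ), l ≠ [] ∧ (∀ p ∈ l, p.1 ∈ A ∧ p.2 ∈ A) ∧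
      M = (l.map (fun p => cfGen p.1 * cfGen p.2)).prod }

/-- `Γ_A` has everywhere strong approximation if for every `q ≥ 2` its reduction
mod `q` is all of `SL₂(ℤ/qℤ)`. -/
def HasEverywhereStrongApprox (A : Set ℕ) : Prop :=
  ∀ q : ℕ, 2 ≤ q → ∀ M : Matrix (Fin 2) (Fin 2) (ZMod q), M.det = 1 →
    ∃ γ ∈ GammaSemigroup A, γ.map ((↑) : ℤ → ZMod q) = M

section Aux

open Matrix

/-- lower unipotent as SL2 element -/
def lM {R : Type*} [CommRing R] (x : R) : Matrix.SpecialLinearGroup (Fin 2) R :=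
  ⟨!![1, 0; x, 1], by simp [Matrix.det_fin_two_of]⟩
/-- upper unipotent as SL2 element -/
def uM {R : Type*} [CommRing R] (x : R) : Matrix.SpecialLinearGroup (Fin 2) R :=
  ⟨!![1, x; 0, 1], by simp [Matrix.det_fin_two_of]⟩

variable {R : Type*} [CommRing R]

lemma lM_mul (x y : R) : lM x * lM y = lM (x + y) := by
  apply Matrix.SpecialLinearGroup.ext
  intro i j
  rw [Matrix.SpecialLinearGroup.coe_mul]
  simp [lM, Matrix.SpecialLinearGroup.coe_mul, Matrix.mul_fin_two, add_comm]

lemma uM_mul (x y : R) : uM x * uM y = uM (x + y) := by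
  apply Matrix.SpecialLinearGroup.ext
  intro i j
  rw [Matrix.SpecialLinearGroup.coe_mul]
  simp [uM, Matrix.SpecialLinearGroup.coe_mul, Matrix.mul_fin_two, add_comm]

@[simp] lemma lM_zero : (lM (0:R)) = 1 := by
  apply Matrix.SpecialLinearGroup.ext
  intro i j
  simp [lM, Matrix.SpecialLinearGroup.coe_one, Matrix.one_fin_two]

@[simp] lemma uM_zero : (uM (0:R)) = 1 := by
  apply Matrix.SpecialLinearGroup.ext
  intro i j
  simp [uM, Matrix.SpecialLinearGroup.coe_one, Matrix.one_fin_two]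

lemma lM_inv (x : R) : (lM x)⁻¹ = lM (-x) := by
  apply inv_eq_of_mul_eq_one_right
  rw [lM_mul]; simp

lemma uM_inv (x : R) : (uM x)⁻¹ = uM (-x) := by
  apply inv_eq_of_mul_eq_one_right
  rw [uM_mul]; simp

lemma tri_eq (u b v : R) (huv : u * v = 1) :
    ((uM u * lM (-v) * uM u * uM (-1) * lM 1 * uM (-1) * uM (v*b) :
      Matrix.SpecialLinearGroup (Fin 2) R) : Matrix (Fin 2) (Fin 2) R) = !![u,b;0,v] := by
  simp only [Matrix.SpecialLinearGroup.coe_mul]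
  ext i j
  fin_cases i <;> fin_cases j <;>
    simp [lM, uM, Matrix.SpecialLinearGroup.coe_mul, Matrix.mul_fin_two]
  · linear_combination (-u) * huv
  · linear_combination (1 - b*(u*v-1)) * huv
  · linear_combination (-1 : R) * huv
  · linear_combination (-v*b) * huv

lemma tri_mem (H : Subgroup (Matrix.SpecialLinearGroup (Fin 2) R))
    (hL : ∀ x : R, lM x ∈ H) (hU : ∀ x : R, uM x ∈ H)
    (g : Matrix.SpecialLinearGroup (Fin 2) R) (hg : (g : Matrix (Fin 2) (Fin 2) R) 1 0 = 0) :
    g ∈ H := by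
  have hdet : (g : Matrix (Fin 2) (Fin 2) R) 0 0 * (g : Matrix (Fin 2) (Fin 2) R) 1 1 = 1 := by
    have h := g.prop
    rw [Matrix.det_fin_two, hg] at h
    simpa using h
  have hge : g = uM ((g : Matrix (Fin 2) (Fin 2) R) 0 0) * lM (-((g : Matrix (Fin 2) (Fin 2) R) 1 1))
      * uM ((g : Matrix (Fin 2) (Fin 2) R) 0 0) * uM (-1) * lM 1 * uM (-1)
      * uM (((g : Matrix (Fin 2) (Fin 2) R) 1 1) * ((g : Matrix (Fin 2) (Fin 2) R) 0 1)) := by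
    apply Subtype.ext
    rw [tri_eq _ _ _ hdet]
    conv_lhs => rw [Matrix.eta_fin_two (g : Matrix (Fin 2) (Fin 2) R)]
    rw [hg]
  rw [hge]
  exact mul_mem (mul_mem (mul_mem (mul_mem (mul_mem (mul_mem (hU _) (hL _)) (hU _)) (hU _)) (hL _)) (hU _)) (hU _)

lemma unit_mem (H : Subgroup (Matrix.SpecialLinearGroup (Fin 2) R))
    (hL : ∀ x : R, lM x ∈ H) (hU : ∀ x : R, uM x ∈ H)
    (g : Matrix.SpecialLinearGroup (Fin 2) R)
    (hc : IsUnit ((g : Matrix (Fin 2) (Fin 2) R) 1 0)) : g ∈ H := by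
  obtain ⟨cu, hcu⟩ := hc
  set a := (g : Matrix (Fin 2) (Fin 2) R) 0 0 with ha
  set c := (g : Matrix (Fin 2) (Fin 2) R) 1 0 with hcc
  set s : R := (1 - a) * ((cu⁻¹ : Rˣ) : R) with hs
  have hsc : s * c = 1 - a := by
    rw [hs, ← hcu, mul_assoc]
    simp
  have key : ((lM (-c) * (uM s * g) : Matrix.SpecialLinearGroup (Fin 2) R) :
      Matrix (Fin 2) (Fin 2) R) 1 0 = 0 := by
    have hg2 : (g : Matrix (Fin 2) (Fin 2) R) =
        !![a, (g : Matrix (Fin 2) (Fin 2) R) 0 1; c, (g : Matrix (Fin 2) (Fin 2) R) 1 1] := by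
      rw [ha, hcc]; exact Matrix.eta_fin_two _
    rw [Matrix.SpecialLinearGroup.coe_mul, Matrix.SpecialLinearGroup.coe_mul, hg2]
    simp [lM, uM, Matrix.mul_fin_two]
    linear_combination (-c) * hsc
  have hm : lM (-c) * (uM s * g) ∈ H := tri_mem H hL hU _ key
  have h2 : uM s * g ∈ H := (H.mul_mem_cancel_left (hL _)).mp hm
  exact (H.mul_mem_cancel_left (hU _)).mp h2

lemma exists_unit_shift {q : ℕ} [NeZero q] (a b c d : ZMod q) (hdet : a * d - b * c = 1) :
    ∃ t : ℕ, IsUnit (c + (t : ZMod q) * a) := by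
  classical
  set t : ℕ := ∏ p ∈ q.primeFactors.filter (fun p => ¬ p ∣ c.val), p with htdef
  refine ⟨t, ?_⟩
  set x := c + (t : ZMod q) * a with hx
  have hco : Nat.Coprime x.val q := by
    by_contra hnc
    have hm1 : Nat.gcd x.val q ≠ 1 := hnc
    have hp := Nat.minFac_prime hm1
    set p := (Nat.gcd x.val q).minFac with hpdef
    have hpq : p ∣ q := (Nat.minFac_dvd _).trans (Nat.gcd_dvd_right _ _)
    have hpx : p ∣ x.val := (Nat.minFac_dvd _).trans (Nat.gcd_dvd_left _ _)
    haveI : Fact p.Prime := ⟨hp⟩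
    let ψ : ZMod q →+* ZMod p := ZMod.castHom hpq (ZMod p)
    have key : ∀ y : ZMod q, p ∣ y.val ↔ ψ y = 0 := by
      intro y
      rw [ZMod.castHom_apply, ← ZMod.natCast_val, ZMod.natCast_eq_zero_iff]
    have hxe : ψ c + (t : ZMod p) * ψ a = 0 := by
      have h0 : ψ x = 0 := (key x).mp hpx
      rw [hx, map_add, _root_.map_mul, map_natCast] at h0
      exact h0
    by_cases hc : p ∣ c.val
    · have hψc : ψ c = 0 := (key c).mp hc
      have hpt : ¬ p ∣ t := by
        intro hdvd
        obtain ⟨r, hr, hpr⟩ := (hp.prime.dvd_finset_prod_iff _).mp hdvd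
        rw [Finset.mem_filter, Nat.mem_primeFactors] at hr
        have hpr' : p = r := (Nat.prime_dvd_prime_iff_eq hp hr.1.1).mp hpr
        exact hr.2 (hpr' ▸ hc)
      have hta : (t : ZMod p) ≠ 0 := by
        rw [Ne, ZMod.natCast_eq_zero_iff]; exact hpt
      have hψa : ψ a ≠ 0 := by
        intro h0
        have hψdet := congrArg ψ hdet
        rw [map_sub, _root_.map_mul, _root_.map_mul, _root_.map_one, h0, hψc] at hψdet
        simp at hψdet
      rw [hψc, zero_add] at hxe
      exact (mul_ne_zero hta hψa) hxe
    · have hψc : ψ c ≠ 0 := fun h0 => hc ((key c).mpr h0)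
      have hpt : p ∣ t := Finset.dvd_prod_of_mem _ (by
        rw [Finset.mem_filter, Nat.mem_primeFactors]
        exact ⟨⟨hp, hpq, NeZero.ne q⟩, hc⟩)
      have ht0 : (t : ZMod p) = 0 := by
        rw [ZMod.natCast_eq_zero_iff]; exact hpt
      rw [ht0, zero_mul, add_zero] at hxe
      exact hψc hxe
  refine ⟨ZMod.unitOfCoprime x.val hco, ?_⟩
  simp [ZMod.coe_unitOfCoprime, ZMod.natCast_val, ZMod.cast_id]

lemma sl2_zmod_gen (q : ℕ) [NeZero q] (H : Subgroup (Matrix.SpecialLinearGroup (Fin 2) (ZMod q)))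
    (hL : ∀ x : ZMod q, lM x ∈ H) (hU : ∀ x : ZMod q, uM x ∈ H)
    (g : Matrix.SpecialLinearGroup (Fin 2) (ZMod q)) : g ∈ H := by
  have hdet : (g : Matrix (Fin 2) (Fin 2) (ZMod q)) 0 0 * (g : Matrix (Fin 2) (Fin 2) (ZMod q)) 1 1
      - (g : Matrix (Fin 2) (Fin 2) (ZMod q)) 0 1 * (g : Matrix (Fin 2) (Fin 2) (ZMod q)) 1 0 = 1 := by
    have h := g.prop
    rwa [Matrix.det_fin_two] at h
  obtain ⟨t, ht⟩ := exists_unit_shift _ _ _ _ hdet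
  have key : ((lM ((t : ZMod q)) * g : Matrix.SpecialLinearGroup (Fin 2) (ZMod q)) :
      Matrix (Fin 2) (Fin 2) (ZMod q)) 1 0
      = (g : Matrix (Fin 2) (Fin 2) (ZMod q)) 1 0 + (t : ZMod q) * (g : Matrix (Fin 2) (Fin 2) (ZMod q)) 0 0 := by
    rw [Matrix.SpecialLinearGroup.coe_mul]
    conv_lhs => rw [Matrix.eta_fin_two (g : Matrix (Fin 2) (Fin 2) (ZMod q))]
    simp [lM, Matrix.mul_fin_two]
    ring
  have hmem : lM ((t : ZMod q)) * g ∈ H := by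
    apply unit_mem H hL hU
    rw [key]
    exact ht
  exact (H.mul_mem_cancel_left (hL _)).mp hmem

lemma cf_comm_L (α β γ : R) :
    (!![1,0;α-γ,1] : Matrix (Fin 2) (Fin 2) R) * (!![0,1;1,γ] * !![0,1;1,β]) =
      !![0,1;1,α] * !![0,1;1,β] := by
  ext i j
  fin_cases i <;> fin_cases j <;> simp [Matrix.mul_fin_two] <;> ring

lemma cf_comm_U (α β γ : R) :
    ((!![0,1;1,β] : Matrix (Fin 2) (Fin 2) R) * !![0,1;1,γ]) * !![1,α-γ;0,1] =
      !![0,1;1,β] * !![0,1;1,α] := by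
  ext i j
  fin_cases i <;> fin_cases j <;> simp [Matrix.mul_fin_two] <;> ring

end Aux

lemma strong_approx_aux (A : Finset ℕ) (b₀ : ℕ) (hb₀ : b₀ ∈ A)
    (hg1 : (A.gcd (fun a => (a : ℤ) - (b₀ : ℤ))).natAbs = 1) :
    HasEverywhereStrongApprox ↑A := by
  intro q hq M hM
  haveI : NeZero q := ⟨by omega⟩
  have hdetcf : ∀ a b : ℕ, (cfGen a * cfGen b).det = 1 := by
    intro a b
    rw [Matrix.det_mul]
    simp [cfGen, Matrix.det_fin_two_of]
  have hdetmap : ∀ γ : Matrix (Fin 2) (Fin 2) ℤ, γ.det = 1 →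
      (γ.map ((↑) : ℤ → ZMod q)).det = 1 := by
    intro γ hγ
    have h := RingHom.map_det (Int.castRingHom (ZMod q)) γ
    rw [hγ, RingHom.mapMatrix_apply, Int.coe_castRingHom] at h
    simpa using h.symm
  set G := Matrix.SpecialLinearGroup (Fin 2) (ZMod q) with hG
  set P : Set G := {g | ∃ γ ∈ GammaSemigroup (↑A : Set ℕ),
    γ.map ((↑) : ℤ → ZMod q) = (g : Matrix (Fin 2) (Fin 2) (ZMod q))} with hPdef
  have hmul : ∀ {g h : G}, g ∈ P → h ∈ P → g * h ∈ P := by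
    rintro g h ⟨γ₁, ⟨l₁, hl₁ne, hl₁mem, hl₁prod⟩, hγ₁⟩ ⟨γ₂, ⟨l₂, hl₂ne, hl₂mem, hl₂prod⟩, hγ₂⟩
    refine ⟨γ₁ * γ₂, ⟨l₁ ++ l₂, by simp [hl₁ne], ?_, ?_⟩, ?_⟩
    · intro p hp
      rcases List.mem_append.mp hp with h' | h'
      exacts [hl₁mem p h', hl₂mem p h']
    · rw [List.map_append, List.prod_append, hl₁prod, hl₂prod]
    · rw [Matrix.SpecialLinearGroup.coe_mul, ← hγ₁, ← hγ₂]
      exact Matrix.map_mul (f := Int.castRingHom (ZMod q))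
  let gensl : ℕ → ℕ → G := fun a b =>
    ⟨(cfGen a * cfGen b).map ((↑) : ℤ → ZMod q), hdetmap _ (hdetcf a b)⟩
  have hgen : ∀ a ∈ A, ∀ b ∈ A, gensl a b ∈ P := by
    intro a ha b hb
    exact ⟨cfGen a * cfGen b, ⟨[(a,b)], by simp, by simp [ha, hb], by simp⟩, rfl⟩
  have hpow : ∀ g : G, g ∈ P → ∀ n : ℕ, 1 ≤ n → g ^ n ∈ P := by
    intro g hg n hn
    induction n with
    | zero => omega
    | succ m ih =>
      rcases Nat.eq_zero_or_pos m with rfl | hm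
      · simpa using hg
      · rw [pow_succ]; exact hmul (ih hm) hg
  have hone : (1 : G) ∈ P := by
    have h0 := hgen b₀ hb₀ b₀ hb₀
    have h1 := hpow _ h0 (orderOf (gensl b₀ b₀)) (orderOf_pos _)
    rwa [pow_orderOf_eq_one] at h1
  have hinv : ∀ g : G, g ∈ P → g⁻¹ ∈ P := by
    intro g hg
    rcases Nat.lt_or_ge 1 (orderOf g) with h1 | h1
    · have hmem := hpow g hg (orderOf g - 1) (by omega)
      have heq : g⁻¹ = g ^ (orderOf g - 1) := by
        apply inv_eq_of_mul_eq_one_right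
        rw [← pow_succ', Nat.sub_add_cancel (by omega : 1 ≤ orderOf g), pow_orderOf_eq_one]
      rw [heq]; exact hmem
    · have ho : orderOf g = 1 := by
        have := orderOf_pos g; omega
      have hg1' : g = 1 := orderOf_eq_one_iff.mp ho
      rw [hg1']; simpa using hone
  let Psub : Subgroup G :=
    { carrier := P
      mul_mem' := fun ha hb => hmul ha hb
      one_mem' := hone
      inv_mem' := fun {g} hg => hinv g hg }
  have cast_cf : ∀ x : ℕ, (cfGen x).map ((↑) : ℤ → ZMod q) = !![0,1;1,(x : ZMod q)] := by
    intro x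
    ext i j
    fin_cases i <;> fin_cases j <;> simp [cfGen, Matrix.map_apply]
  have hmap2 : ∀ x y : ℕ, (cfGen x * cfGen y).map ((↑) : ℤ → ZMod q) =
      !![0,1;1,(x : ZMod q)] * !![0,1;1,(y : ZMod q)] := by
    intro x y
    rw [show ((↑) : ℤ → ZMod q) = ⇑(Int.castRingHom (ZMod q)) from rfl, Matrix.map_mul]
    rw [show ⇑(Int.castRingHom (ZMod q)) = ((↑) : ℤ → ZMod q) from rfl, cast_cf, cast_cf]
  have hLmem : ∀ a ∈ A, ∀ c ∈ A, lM ((a : ZMod q) - (c : ZMod q)) ∈ Psub := by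
    intro a ha c hc
    have heq : lM ((a : ZMod q) - (c : ZMod q)) * gensl c b₀ = gensl a b₀ := by
      apply Subtype.ext
      rw [Matrix.SpecialLinearGroup.coe_mul]
      show (!![1,0;(a : ZMod q)-(c : ZMod q),1] : Matrix (Fin 2) (Fin 2) (ZMod q)) *
        ((cfGen c * cfGen b₀).map ((↑) : ℤ → ZMod q)) = (cfGen a * cfGen b₀).map ((↑) : ℤ → ZMod q)
      rw [hmap2, hmap2]
      exact cf_comm_L _ _ _
    have heq2 : lM ((a : ZMod q) - (c : ZMod q)) = gensl a b₀ * (gensl c b₀)⁻¹ := by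
      rw [← heq, mul_inv_cancel_right]
    rw [heq2]
    exact mul_mem (hgen a ha b₀ hb₀) (inv_mem (hgen c hc b₀ hb₀))
  have hUmem : ∀ a ∈ A, ∀ c ∈ A, uM ((a : ZMod q) - (c : ZMod q)) ∈ Psub := by
    intro a ha c hc
    have heq : gensl b₀ c * uM ((a : ZMod q) - (c : ZMod q)) = gensl b₀ a := by
      apply Subtype.ext
      rw [Matrix.SpecialLinearGroup.coe_mul]
      show ((cfGen b₀ * cfGen c).map ((↑) : ℤ → ZMod q)) *
        (!![1,(a : ZMod q)-(c : ZMod q);0,1] : Matrix (Fin 2) (Fin 2) (ZMod q)) =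
        (cfGen b₀ * cfGen a).map ((↑) : ℤ → ZMod q)
      rw [hmap2, hmap2]
      exact cf_comm_U _ _ _
    have heq2 : uM ((a : ZMod q) - (c : ZMod q)) = (gensl b₀ c)⁻¹ * gensl b₀ a := by
      rw [← heq, inv_mul_cancel_left]
    rw [heq2]
    exact mul_mem (inv_mem (hgen b₀ hb₀ c hc)) (hgen b₀ hb₀ a ha)
  let NN : AddSubgroup ℤ :=
    { carrier := {n : ℤ | lM ((n : ZMod q)) ∈ Psub ∧ uM ((n : ZMod q)) ∈ Psub}
      zero_mem' := ⟨by rw [Int.cast_zero, lM_zero]; exact hone,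
        by rw [Int.cast_zero, uM_zero]; exact hone⟩
      add_mem' := by
        rintro x y ⟨hx1, hx2⟩ ⟨hy1, hy2⟩
        constructor
        · rw [Int.cast_add, ← lM_mul]; exact mul_mem hx1 hy1
        · rw [Int.cast_add, ← uM_mul]; exact mul_mem hx2 hy2
      neg_mem' := by
        rintro x ⟨hx1, hx2⟩
        constructor
        · rw [Int.cast_neg, ← lM_inv]; exact inv_mem hx1
        · rw [Int.cast_neg, ← uM_inv]; exact inv_mem hx2 }
  have hdiff : ∀ a ∈ A, ((a : ℤ) - (b₀ : ℤ)) ∈ NN := by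
    intro a ha
    have hcast : (((a : ℤ) - (b₀ : ℤ) : ℤ) : ZMod q) = (a : ZMod q) - (b₀ : ZMod q) := by
      push_cast; ring
    constructor
    · show lM ((((a : ℤ) - (b₀ : ℤ) : ℤ)) : ZMod q) ∈ Psub
      rw [hcast]; exact hLmem a ha b₀ hb₀
    · show uM ((((a : ℤ) - (b₀ : ℤ) : ℤ)) : ZMod q) ∈ Psub
      rw [hcast]; exact hUmem a ha b₀ hb₀
  obtain ⟨d, hd⟩ := Int.subgroup_cyclic NN
  have hddvd : ∀ a ∈ A, d ∣ (a : ℤ) - (b₀ : ℤ) := by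
    intro a ha
    have hmem := hdiff a ha
    rw [hd, AddSubgroup.mem_closure_singleton] at hmem
    obtain ⟨n, hn⟩ := hmem
    exact ⟨n, by rw [← hn, smul_eq_mul]; ring⟩
  have hd1 : d = 1 ∨ d = -1 := by
    have hdg : d ∣ A.gcd (fun a => (a : ℤ) - (b₀ : ℤ)) := Finset.dvd_gcd hddvd
    have := Int.natAbs_dvd_natAbs.mpr hdg
    rw [hg1] at this
    have hna : d.natAbs = 1 := Nat.dvd_one.mp this
    exact Int.natAbs_eq_iff.mp hna
  have hone_NN : (1 : ℤ) ∈ NN := by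
    rw [hd, AddSubgroup.mem_closure_singleton]
    rcases hd1 with rfl | rfl
    · exact ⟨1, by rw [smul_eq_mul]; norm_num⟩
    · exact ⟨-1, by rw [smul_eq_mul]; norm_num⟩
  have hall : ∀ n : ℤ, (n : ℤ) ∈ NN := by
    intro n
    have := AddSubgroup.zsmul_mem NN hone_NN n
    simpa using this
  have hLall : ∀ x : ZMod q, lM x ∈ Psub := by
    intro x
    have hx : (((x.val : ℤ)) : ZMod q) = x := by
      push_cast
      simp [ZMod.natCast_val, ZMod.cast_id]
    have := (hall (x.val : ℤ)).1
    rwa [hx] at this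
  have hUall : ∀ x : ZMod q, uM x ∈ Psub := by
    intro x
    have hx : (((x.val : ℤ)) : ZMod q) = x := by
      push_cast
      simp [ZMod.natCast_val, ZMod.cast_id]
    have := (hall (x.val : ℤ)).2
    rwa [hx] at this
  have := sl2_zmod_gen q Psub hLall hUall ⟨M, hM⟩
  obtain ⟨γ, hγmem, hγ⟩ := this
  exact ⟨γ, hγmem, hγ⟩

theorem alphabet_in_residue_class_of_not_strong_approx (A : Finset ℕ)
    (hA : ∀ a ∈ A, 0 < a) (h : ¬ HasEverywhereStrongApprox ↑A) :
    ∃ k : ℕ, 2 ≤ k ∧ ∃ r : ℕ, ∀ a ∈ A, a ≡ r [MOD k] := by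
  by_contra hcon
  push_neg at hcon
  obtain ⟨a₀, ha₀A, _⟩ := hcon 2 le_rfl 0
  set g : ℤ := A.gcd (fun a => (a : ℤ) - (a₀ : ℤ)) with hgdef
  have key : ∀ a ∈ A, a ≡ a₀ [MOD g.natAbs] := by
    intro a ha
    rw [Nat.modEq_iff_dvd]
    have h1 : g ∣ (a : ℤ) - (a₀ : ℤ) := by
      rw [hgdef]
      exact Finset.gcd_dvd ha
    have h2 : g ∣ (a₀ : ℤ) - (a : ℤ) := by
      have := h1.neg_right
      rwa [neg_sub] at this
    exact Int.natAbs_dvd.mpr h2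
  rcases Nat.lt_or_ge g.natAbs 2 with hlt | hge
  · interval_cases hg : g.natAbs
    · -- g = 0 : all elements equal a₀
      have hgz : g = 0 := Int.natAbs_eq_zero.mp hg
      have hall : ∀ a ∈ A, (a : ℤ) - (a₀ : ℤ) = 0 := by
        intro a ha
        have hdvd : g ∣ (a : ℤ) - (a₀ : ℤ) := by
          rw [hgdef]
          exact Finset.gcd_dvd ha
        rw [hgz] at hdvd
        exact zero_dvd_iff.mp hdvd
      obtain ⟨a, haA, hne⟩ := hcon 2 le_rfl a₀
      have : a = a₀ := by
        have := hall a haA; omega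
      exact hne (by rw [this])
    · -- g.natAbs = 1 : strong approximation holds
      exact h (strong_approx_aux A a₀ ha₀A hg)
  · obtain ⟨a, haA, hne⟩ := hcon g.natAbs hge a₀
    exact hne (key a haA)
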